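/- arXiv:2206.14439 — 4 statements merged into one kernel-verified Lean document; each statement's English description precedes it below -/
import Mathlib

section
/- Lemma (deterministic core of Theorem 1). Let p, q, p', q' be positive probability densities on ℝ^d and let c₁, c₂ ≥ 1. Suppose that for all x ∈ ℝ^d, 1/c₁ ≤ q(x)/p(x) ≤ c₁ and 1/c₂ ≤ q'(x)/p'(x) ≤ c₂. Then ∫_{ℝ^d} |q'(x) − (p'(x)/p(x))·q(x)| dx ≤ 2(c₁ + c₂ − 2). -/
open MeasureTheory

noncomputable section

/-- A probability density on `ℝ^d`: measurable, nonnegative, integrating to 1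
w.r.t. Lebesgue measure. -/
def IsDensity (d : ℕ) (p : (Fin d → ℝ) → ℝ) : Prop :=
  Measurable p ∧ (∀ x, 0 ≤ p x) ∧ (∫ x, p x) = 1

/-- A positive probability density on `ℝ^d`. -/
def IsPosDensity (d : ℕ) (p : (Fin d → ℝ) → ℝ) : Prop :=
  IsDensity d p ∧ ∀ x, 0 < p x

/-- **Deterministic core of Theorem 1.** If `q/p` is sandwiched in `[1/c₁, c₁]`
and `q'/p'` in `[1/c₂, c₂]`, then `∫ |q' - (p'/p)·q| ≤ 2(c₁ + c₂ - 2)`. -/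
theorem det_core_thm1
    {d : ℕ} (p q p' q' : (Fin d → ℝ) → ℝ)
    (hp : IsPosDensity d p) (hq : IsPosDensity d q)
    (hp' : IsPosDensity d p') (hq' : IsPosDensity d q')
    (c₁ c₂ : ℝ) (hc₁ : 1 ≤ c₁) (hc₂ : 1 ≤ c₂)
    (hsand₁ : ∀ x, 1 / c₁ ≤ q x / p x ∧ q x / p x ≤ c₁)
    (hsand₂ : ∀ x, 1 / c₂ ≤ q' x / p' x ∧ q' x / p' x ≤ c₂) :
    ∫ x, |q' x - (p' x / p x) * q x| ≤ 2 * (c₁ + c₂ - 2) := by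
  obtain ⟨⟨hpm, hpn, hpi⟩, hppos⟩ := hp
  obtain ⟨⟨hp'm, hp'n, hp'i⟩, hp'pos⟩ := hp'
  obtain ⟨⟨hq'm, _, _⟩, _⟩ := hq'
  obtain ⟨⟨hqm, _, _⟩, _⟩ := hq
  have hC : (0:ℝ) ≤ c₁ + c₂ - 2 := by linarith
  have hp'int : Integrable p' := by
    by_contra h
    rw [integral_undef h] at hp'i; norm_num at hp'i
  have hgint : Integrable (fun x => (c₁ + c₂ - 2) * p' x) := hp'int.const_mul _
  have hbound : ∀ x, |q' x - (p' x / p x) * q x| ≤ (c₁ + c₂ - 2) * p' x := by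
    intro x
    obtain ⟨h1, h2⟩ := hsand₁ x
    obtain ⟨h3, h4⟩ := hsand₂ x
    have hpx := hppos x
    have hp'x := hp'pos x
    have hc1 : (0:ℝ) < c₁ := by linarith
    have hc2 : (0:ℝ) < c₂ := by linarith
    have e1 : q' x = (q' x / p' x) * p' x := by field_simp
    have e2 : (p' x / p x) * q x = (q x / p x) * p' x := by field_simp
    rw [e1, e2, abs_le]
    have h1' : 2 - c₁ ≤ q x / p x := by
      have : 2 - c₁ ≤ 1/c₁ := by rw [le_div_iff₀ hc1]; nlinarith
      linarith
    have h3' : 2 - c₂ ≤ q' x / p' x := by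
      have : 2 - c₂ ≤ 1/c₂ := by rw [le_div_iff₀ hc2]; nlinarith
      linarith
    constructor <;> nlinarith [hp'x.le]
  have hfm : Measurable fun x => |q' x - (p' x / p x) * q x| :=
    (hq'm.sub ((hp'm.div hpm).mul hqm)).abs
  have hfint : Integrable (fun x => |q' x - (p' x / p x) * q x|) := by
    refine hgint.mono' hfm.aestronglyMeasurable (ae_of_all _ fun x => ?_)
    simpa [Real.norm_eq_abs, abs_abs] using hbound x
  calc ∫ x, |q' x - (p' x / p x) * q x|
      ≤ ∫ x, (c₁ + c₂ - 2) * p' x := integral_mono hfint hgint hbound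
    _ = (c₁ + c₂ - 2) * ∫ x, p' x := integral_const_mul _ _
    _ = c₁ + c₂ - 2 := by rw [hp'i, mul_one]
    _ ≤ 2 * (c₁ + c₂ - 2) := by linarith
end
end

section
/- Theorem (Thm. 4 of the paper: ratio consistency implies ratio stability). Let A be a learning algorithm that is (c_n, δ_n)-ratio consistent. Let μ₁, μ₂ be positive probability densities on ℝ^d with sup_x μ₂(x)/μ₁(x) < ∞, let n ≥ 2, and let Z₁ ∈ (ℝ^d)^n and Z₂ ∈ (ℝ^d)^{n−1} be random tuples (on a common probability space, not necessarily independent) whose laws are, respectively, the n-fold product of the measure with density μ₁ and the (n−1)-fold product of the measure with density μ₂. Then with probability at least 1 − δ_n − δ_{n−1}, sup_{x∈ℝ^d} |log(μ₁(x)/p_{A(Z₁)}(x)) − log(μ₂(x)/p_{A(Z₂)}(x))| ≤ log c_n + log c_{n−1}. In particular, if c_n and δ_n are nonincreasing in n, A is (2 log c_{n−1}, 2δ_{n−1})-ratio stable at these sample sizes. -/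
open MeasureTheory

noncomputable section

/-- The measure on `ℝ^d` with density `p` w.r.t. Lebesgue measure. -/
def densMeasure {d : ℕ} (p : (Fin d → ℝ) → ℝ) : Measure (Fin d → ℝ) :=
  volume.withDensity (fun x => ENNReal.ofReal (p x))

/-- The `n`-fold product of the measure on `ℝ^d` with density `p`. -/
def prodDens {d : ℕ} (n : ℕ) (p : (Fin d → ℝ) → ℝ) :
    Measure (Fin n → Fin d → ℝ) :=
  Measure.pi (fun _ : Fin n => densMeasure p)

/-- A learning algorithm: assigns to each `n` and each tuple `Z ∈ (ℝ^d)^n` a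
probability density on `ℝ^d`, measurably in `(Z, x)`. -/
structure LearnAlg (d : ℕ) where
  out : (n : ℕ) → (Fin n → Fin d → ℝ) → (Fin d → ℝ) → ℝ
  meas : ∀ n, Measurable (fun Zx : (Fin n → Fin d → ℝ) × (Fin d → ℝ) => out n Zx.1 Zx.2)
  dens : ∀ n Z, IsDensity d (out n Z)

/-- `(c_n, δ_n)`-ratio consistency: `c_n ≥ 1` and for every positive density `μ`
and every `n`, with probability at least `1 - δ_n` over `Z` drawn i.i.d. from `μ`,
`sup_x |log (p_{A(Z)}(x) / μ(x))| ≤ log c_n`. -/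
def RC {d : ℕ} (A : LearnAlg d) (c δ : ℕ → ℝ) : Prop :=
  (∀ n, 1 ≤ c n) ∧
  ∀ μ : (Fin d → ℝ) → ℝ, IsPosDensity d μ → ∀ n : ℕ,
    ENNReal.ofReal (1 - δ n) ≤
      prodDens n μ {Z | ∀ x, |Real.log (A.out n Z x / μ x)| ≤ Real.log (c n)}

open Filter Topology Set
open scoped ENNReal

lemma analytic_exists_measurable_subset
    {X : Type*} [TopologicalSpace X] [T2Space X] [FirstCountableTopology X]
    [MeasurableSpace X] [OpensMeasurableSpace X]
    (ν : Measure X) [IsFiniteMeasure ν] {A : Set X}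
    (hA : MeasureTheory.AnalyticSet A) {r : ℝ≥0∞} (hr : r < ν A) :
    ∃ C : Set X, MeasurableSet C ∧ C ⊆ A ∧ r ≤ ν C := by
  rw [MeasureTheory.AnalyticSet] at hA
  rcases hA with rfl | ⟨f, hfc, rfl⟩
  · simp at hr
  set T : List ℕ → Set (ℕ → ℕ) := fun l => {σ | ∀ i < l.length, σ i ≤ l.getD i 0} with hT
  have step : ∀ l : List ℕ, r < ν (f '' T l) → ∃ m : ℕ, r < ν (f '' T (l ++ [m])) := by
    intro l hl
    have hmono : Monotone fun m : ℕ => T (l ++ [m]) := by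
      intro m m' hmm σ hσ i hi
      simp only [List.length_append, List.length_singleton] at hi
      rcases lt_or_ge i l.length with h | h
      · have := hσ i (by simp only [List.length_append, List.length_singleton]; omega)
        rwa [List.getD_append _ _ _ _ h] at this ⊢
      · have hi' : i = l.length := by omega
        subst hi'
        have := hσ l.length (by simp)
        rw [List.getD_append_right _ _ _ _ le_rfl] at this ⊢
        simp only [Nat.sub_self] at this ⊢
        exact le_trans (by simpa using this) (by simpa using hmm)
    have hunion : T l = ⋃ m : ℕ, T (l ++ [m]) := by
      apply Set.Subset.antisymm
      · intro σ hσ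
        refine Set.mem_iUnion.2 ⟨σ l.length, ?_⟩
        intro i hi
        simp only [List.length_append, List.length_singleton] at hi
        rcases lt_or_ge i l.length with h | h
        · rw [List.getD_append _ _ _ _ h]; exact hσ i h
        · have hi' : i = l.length := by omega
          subst hi'
          rw [List.getD_append_right _ _ _ _ le_rfl]
          simp
      · exact Set.iUnion_subset fun m σ hσ i hi =>
          (List.getD_append _ _ _ _ hi) ▸ hσ i
            (by simp only [List.length_append, List.length_singleton]; omega)
    have hdir : Directed (· ⊆ ·) fun m : ℕ => f '' T (l ++ [m]) :=
      ((Set.monotone_image.comp hmono).directed_le)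
    have hiU := Directed.measure_iUnion (μ := ν) hdir
    rw [← Set.image_iUnion, ← hunion] at hiU
    rw [hiU] at hl
    exact lt_iSup_iff.mp hl
  have base : r < ν (f '' T []) := by
    have h0 : T [] = Set.univ := by ext σ; simp [hT]
    rw [h0, Set.image_univ]; exact hr
  let g : ℕ → {l : List ℕ // r < ν (f '' T l)} := fun k =>
    Nat.rec ⟨[], base⟩
      (fun _ p => ⟨p.1 ++ [(step p.1 p.2).choose], (step p.1 p.2).choose_spec⟩) k
  have hgsucc : ∀ k, ∃ m, (g (k + 1)).1 = (g k).1 ++ [m] := fun k => ⟨_, rfl⟩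
  have hglen : ∀ k, (g k).1.length = k := by
    intro k
    induction k with
    | zero => rfl
    | succ k ih =>
      obtain ⟨m, hm⟩ := hgsucc k
      rw [hm]; simp [ih]
  set b : ℕ → ℕ := fun i => (g (i + 1)).1.getD i 0 with hb
  have hgetD : ∀ k, ∀ i < k, (g k).1.getD i 0 = b i := by
    intro k
    induction k with
    | zero => omega
    | succ k ih =>
      intro i hi
      rcases lt_or_ge i k with h | h
      · obtain ⟨m, hm⟩ := hgsucc k
        rw [hm, List.getD_append _ _ _ _ (by rw [hglen]; exact h)]
        exact ih i h
      · have hik : i = k := by omega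
        subst hik
        rfl
  have hTk : ∀ k, T (g k).1 = {σ : ℕ → ℕ | ∀ i < k, σ i ≤ b i} := by
    intro k
    ext σ
    simp only [hT, Set.mem_setOf_eq, hglen k]
    exact ⟨fun h i hi => (hgetD k i hi) ▸ h i hi, fun h i hi => (hgetD k i hi).symm ▸ h i hi⟩
  have hKcomp : IsCompact (Set.pi Set.univ fun i => Set.Iic (b i)) :=
    isCompact_univ_pi fun i => (Set.finite_Iic (b i)).isCompact
  refine ⟨⋂ k, closure (f '' T (g k).1),
    MeasurableSet.iInter fun k => isClosed_closure.measurableSet, ?_, ?_⟩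
  · -- ⊆ range f
    intro y hy
    simp only [Set.mem_iInter] at hy
    obtain ⟨V, hV⟩ := (𝓝 y).exists_antitone_basis
    have hpick : ∀ k, ∃ σ : ℕ → ℕ, σ ∈ T (g k).1 ∧ f σ ∈ V k := by
      intro k
      obtain ⟨x, hxV, ⟨σ, hσ, rfl⟩⟩ :=
        mem_closure_iff_nhds.mp (hy k) (V k) (hV.1.mem_of_mem trivial)
      exact ⟨σ, hσ, hxV⟩
    choose σ hσT hσV using hpick
    have htend : Tendsto (fun k => f (σ k)) atTop (𝓝 y) := hV.tendsto hσV
    have hσb : ∀ k, ∀ i < k, σ k i ≤ b i := by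
      intro k
      have := hσT k
      rw [hTk k] at this
      exact this
    set τ : ℕ → (ℕ → ℕ) := fun k i => min (σ k i) (b i) with hτ
    have hτK : ∀ k, τ k ∈ Set.pi Set.univ fun i => Set.Iic (b i) :=
      fun k i _ => Set.mem_Iic.mpr (min_le_right _ _)
    obtain ⟨z, hzK, hz⟩ := hKcomp.exists_clusterPt
      (f := Filter.map τ atTop)
      (le_principal_iff.mpr (Filter.eventually_map.mpr (Filter.Eventually.of_forall hτK)))
    have hzσ : MapClusterPt z atTop σ := by
      rw [mapClusterPt_iff_frequently]
      intro s hs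
      rw [nhds_pi, Filter.mem_pi] at hs
      obtain ⟨I, hIfin, t, htmem, hts⟩ := hs
      have htz : ∀ i, z i ∈ t i := by
        intro i
        have h := htmem i
        rwa [nhds_discrete, Filter.mem_pure] at h
      obtain ⟨N, hN⟩ : ∃ N : ℕ, ∀ i ∈ I, i < N := by
        rcases hIfin.bddAbove with ⟨N, hN⟩
        exact ⟨N + 1, fun i hi => Nat.lt_succ_of_le (hN hi)⟩
      have hmemnhds : I.pi t ∈ 𝓝 z := set_pi_mem_nhds hIfin fun i _ => by
        rw [nhds_discrete, Filter.mem_pure]; exact htz i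
      have hfreq : ∃ᶠ k in atTop, τ k ∈ I.pi t :=
        (mapClusterPt_iff_frequently.mp hz) (I.pi t) hmemnhds
      refine ((hfreq.and_eventually (Filter.eventually_ge_atTop N)).mono ?_)
      rintro k ⟨hkpi, hkN⟩
      apply hts
      intro i hi
      have hib : σ k i ≤ b i := hσb k i (lt_of_lt_of_le (hN i hi) hkN)
      have : τ k i = σ k i := min_eq_left hib
      rw [← this]
      exact hkpi i hi
    have h1 : MapClusterPt (f z) atTop (f ∘ σ) := hzσ.continuousAt_comp hfc.continuousAt
    have h2 : ClusterPt (f z) (𝓝 y) := h1.clusterPt.mono htend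
    exact ⟨z, eq_of_nhds_neBot h2⟩
  · -- measure bound
    have hanti : Antitone fun k => closure (f '' T (g k).1) := by
      apply antitone_nat_of_succ_le
      intro k
      apply closure_mono
      apply Set.image_mono
      rw [hTk k, hTk (k + 1)]
      intro σ hσ i hi
      exact hσ i (by omega)
    have hmeas : ∀ k, NullMeasurableSet (closure (f '' T (g k).1)) ν :=
      fun k => (isClosed_closure.measurableSet).nullMeasurableSet
    rw [Directed.measure_iInter hmeas hanti.directed_ge ⟨0, measure_ne_top _ _⟩]
    exact le_iInf fun k => le_trans (g k).2.le (measure_mono subset_closure)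

lemma densMeasure_isProb {d : ℕ} {p : (Fin d → ℝ) → ℝ} (hp : IsDensity d p) :
    IsProbabilityMeasure (densMeasure p) := by
  constructor
  have hint : Integrable p := by
    by_contra h
    exact one_ne_zero (hp.2.2.symm.trans (integral_undef h))
  rw [densMeasure, withDensity_apply _ MeasurableSet.univ, Measure.restrict_univ,
    ← ofReal_integral_eq_lintegral_ofReal hint (Filter.Eventually.of_forall hp.2.1),
    hp.2.2, ENNReal.ofReal_one]

lemma prodDens_isProb {d n : ℕ} {p : (Fin d → ℝ) → ℝ} (hp : IsDensity d p) :
    IsProbabilityMeasure (prodDens n p) := by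
  haveI := densMeasure_isProb hp
  rw [prodDens]
  infer_instance

/-- The complement of the "uniform closeness" event is analytic, hence its
measure is at most `ν univ - ν S`. -/
lemma compl_measure_bound {d : ℕ} (A : LearnAlg d) {μ : (Fin d → ℝ) → ℝ}
    (hμ : Measurable μ) (n : ℕ) (t : ℝ)
    (ν : Measure (Fin n → Fin d → ℝ)) [IsFiniteMeasure ν] :
    ν {Z | ∀ x, |Real.log (A.out n Z x / μ x)| ≤ t}ᶜ
      ≤ ν Set.univ - ν {Z | ∀ x, |Real.log (A.out n Z x / μ x)| ≤ t} := by
  set S : Set (Fin n → Fin d → ℝ) := {Z | ∀ x, |Real.log (A.out n Z x / μ x)| ≤ t} with hS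
  have hanal : MeasureTheory.AnalyticSet Sᶜ := by
    have hmW : Measurable fun Zx : (Fin n → Fin d → ℝ) × (Fin d → ℝ) =>
        |Real.log (A.out n Zx.1 Zx.2 / μ Zx.2)| :=
      (Real.measurable_log.comp ((A.meas n).div (hμ.comp measurable_snd))).abs
    have hW : MeasurableSet {Zx : (Fin n → Fin d → ℝ) × (Fin d → ℝ) |
        t < |Real.log (A.out n Zx.1 Zx.2 / μ Zx.2)|} :=
      hmW measurableSet_Ioi
    have himg : Sᶜ = Prod.fst '' {Zx : (Fin n → Fin d → ℝ) × (Fin d → ℝ) |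
        t < |Real.log (A.out n Zx.1 Zx.2 / μ Zx.2)|} := by
      ext Z
      simp only [Set.mem_compl_iff, hS, Set.mem_setOf_eq, not_forall, not_le, Set.mem_image,
        Prod.exists]
      constructor
      · rintro ⟨x, hx⟩
        exact ⟨Z, x, hx, rfl⟩
      · rintro ⟨Z', x, hx, rfl⟩
        exact ⟨x, hx⟩
    rw [himg]
    exact (hW.analyticSet).image_of_continuous continuous_fst
  -- now conclude
  by_contra hcon
  push_neg at hcon
  obtain ⟨r, hr1, hr2⟩ := exists_between hcon
  obtain ⟨C, hCmeas, hCsub, hCr⟩ := analytic_exists_measurable_subset ν hanal hr2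
  have h1 : S ⊆ Cᶜ := fun Z hZ hZC => hCsub hZC hZ
  have h2 : ν S ≤ ν Set.univ - ν C := by
    rw [← measure_compl hCmeas (measure_ne_top _ _)]
    exact measure_mono h1
  have h3 : ν C ≤ ν Set.univ - ν S := by
    apply ENNReal.le_sub_of_add_le_right (measure_ne_top _ _)
    calc ν C + ν S ≤ ν C + (ν Set.univ - ν C) := add_le_add_right h2 _
      _ ≤ ν Set.univ := le_of_eq (add_tsub_cancel_of_le (measure_mono (Set.subset_univ C)))
  exact absurd (hr1.trans_le (hCr.trans h3)) (lt_irrefl _)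

lemma log_div_flip {a : ℝ} (b : ℝ) (ha : 0 < a) :
    Real.log (a / b) = - Real.log (b / a) := by
  rcases eq_or_ne b 0 with rfl | hb
  · simp
  · rw [Real.log_div ha.ne' hb, Real.log_div hb ha.ne']
    ring

/-- **Theorem 4: ratio consistency implies ratio stability.** -/
theorem RC_implies_RS
    {d : ℕ} (A : LearnAlg d) (c δ : ℕ → ℝ) (hA : RC A c δ)
    (μ₁ μ₂ : (Fin d → ℝ) → ℝ)
    (hμ₁ : IsPosDensity d μ₁) (hμ₂ : IsPosDensity d μ₂)
    (hbdd : BddAbove (Set.range fun x => μ₂ x / μ₁ x))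
    (n : ℕ) (hn : 2 ≤ n)
    {Ω : Type*} [MeasurableSpace Ω] (P : Measure Ω) [IsProbabilityMeasure P]
    (Z₁ : Ω → Fin n → Fin d → ℝ) (Z₂ : Ω → Fin (n - 1) → Fin d → ℝ)
    (hZ₁ : Measurable Z₁) (hZ₂ : Measurable Z₂)
    (hZ₁law : Measure.map Z₁ P = prodDens n μ₁)
    (hZ₂law : Measure.map Z₂ P = prodDens (n - 1) μ₂) :
    ENNReal.ofReal (1 - δ n - δ (n - 1)) ≤
      P {ω | ∀ x, |Real.log (μ₁ x / A.out n (Z₁ ω) x)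
                    - Real.log (μ₂ x / A.out (n - 1) (Z₂ ω) x)|
              ≤ Real.log (c n) + Real.log (c (n - 1))} := by
  classical
  set S₁ : Set (Fin n → Fin d → ℝ) :=
    {Z | ∀ x, |Real.log (A.out n Z x / μ₁ x)| ≤ Real.log (c n)} with hS₁
  set S₂ : Set (Fin (n - 1) → Fin d → ℝ) :=
    {Z | ∀ x, |Real.log (A.out (n - 1) Z x / μ₂ x)| ≤ Real.log (c (n - 1))} with hS₂
  set F : Set Ω := {ω | ∀ x, |Real.log (μ₁ x / A.out n (Z₁ ω) x)
                    - Real.log (μ₂ x / A.out (n - 1) (Z₂ ω) x)|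
              ≤ Real.log (c n) + Real.log (c (n - 1))} with hF
  haveI hP1 : IsProbabilityMeasure (prodDens n μ₁) := prodDens_isProb hμ₁.1
  haveI hP2 : IsProbabilityMeasure (prodDens (n - 1) μ₂) := prodDens_isProb hμ₂.1
  have h1 : ENNReal.ofReal (1 - δ n) ≤ prodDens n μ₁ S₁ := hA.2 μ₁ hμ₁ n
  have h2 : ENNReal.ofReal (1 - δ (n - 1)) ≤ prodDens (n - 1) μ₂ S₂ := hA.2 μ₂ hμ₂ (n - 1)
  have h1c : prodDens n μ₁ S₁ᶜ ≤ 1 - ENNReal.ofReal (1 - δ n) := by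
    refine le_trans (compl_measure_bound A hμ₁.1.1 n (Real.log (c n)) (prodDens n μ₁)) ?_
    rw [measure_univ]
    exact tsub_le_tsub_left h1 1
  have h2c : prodDens (n - 1) μ₂ S₂ᶜ ≤ 1 - ENNReal.ofReal (1 - δ (n - 1)) := by
    refine le_trans (compl_measure_bound A hμ₂.1.1 (n - 1) (Real.log (c (n - 1))) (prodDens (n - 1) μ₂)) ?_
    rw [measure_univ]
    exact tsub_le_tsub_left h2 1
  -- pointwise inclusion
  have hsub : Fᶜ ⊆ Z₁ ⁻¹' S₁ᶜ ∪ Z₂ ⁻¹' S₂ᶜ := by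
    intro ω hω
    by_contra hc
    simp only [Set.mem_union, Set.mem_preimage, Set.mem_compl_iff, not_or, not_not] at hc
    obtain ⟨hω1, hω2⟩ := hc
    apply hω
    intro x
    have e1 : Real.log (μ₁ x / A.out n (Z₁ ω) x)
        = - Real.log (A.out n (Z₁ ω) x / μ₁ x) := log_div_flip _ (hμ₁.2 x)
    have e2 : Real.log (μ₂ x / A.out (n - 1) (Z₂ ω) x)
        = - Real.log (A.out (n - 1) (Z₂ ω) x / μ₂ x) := log_div_flip _ (hμ₂.2 x)
    rw [e1, e2]
    have b1 : |Real.log (A.out n (Z₁ ω) x / μ₁ x)| ≤ Real.log (c n) := hω1 x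
    have b2 : |Real.log (A.out (n - 1) (Z₂ ω) x / μ₂ x)| ≤ Real.log (c (n - 1)) := hω2 x
    set u := Real.log (A.out n (Z₁ ω) x / μ₁ x)
    set v := Real.log (A.out (n - 1) (Z₂ ω) x / μ₂ x)
    have : |(-u) - (-v)| ≤ |u| + |v| := by
      have : (-u) - (-v) = v - u := by ring
      rw [this, sub_eq_add_neg]
      exact (abs_add_le _ _).trans (by rw [abs_neg, add_comm])
    exact this.trans (add_le_add b1 b2)
  have hPF1 : P (Z₁ ⁻¹' S₁ᶜ) ≤ prodDens n μ₁ S₁ᶜ := by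
    rw [← hZ₁law]
    exact Measure.le_map_apply hZ₁.aemeasurable _
  have hPF2 : P (Z₂ ⁻¹' S₂ᶜ) ≤ prodDens (n - 1) μ₂ S₂ᶜ := by
    rw [← hZ₂law]
    exact Measure.le_map_apply hZ₂.aemeasurable _
  have hPFc : P Fᶜ ≤ (1 - ENNReal.ofReal (1 - δ n)) + (1 - ENNReal.ofReal (1 - δ (n - 1))) :=
    calc P Fᶜ ≤ P (Z₁ ⁻¹' S₁ᶜ ∪ Z₂ ⁻¹' S₂ᶜ) := measure_mono hsub
      _ ≤ P (Z₁ ⁻¹' S₁ᶜ) + P (Z₂ ⁻¹' S₂ᶜ) := measure_union_le _ _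
      _ ≤ _ := add_le_add (hPF1.trans h1c) (hPF2.trans h2c)
  -- arithmetic
  set x : ℝ := 1 - δ n with hx
  set y : ℝ := 1 - δ (n - 1) with hy
  have hgoal : (1 : ℝ) - δ n - δ (n - 1) = x + y - 1 := by rw [hx, hy]; ring
  rw [hgoal]
  rcases le_or_gt (x + y - 1) 0 with hneg | hpos
  · rw [ENNReal.ofReal_of_nonpos hneg]
    exact zero_le
  have hx1 : x ≤ 1 := ENNReal.ofReal_le_one.mp (h1.trans prob_le_one)
  have hy1 : y ≤ 1 := ENNReal.ofReal_le_one.mp (h2.trans prob_le_one)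
  have hx0 : 0 ≤ x := by linarith
  have hy0 : 0 ≤ y := by linarith
  have hsub1 : (1 : ℝ≥0∞) - ENNReal.ofReal x = ENNReal.ofReal (1 - x) := by
    rw [ENNReal.ofReal_sub 1 hx0, ENNReal.ofReal_one]
  have hsub2 : (1 : ℝ≥0∞) - ENNReal.ofReal y = ENNReal.ofReal (1 - y) := by
    rw [ENNReal.ofReal_sub 1 hy0, ENNReal.ofReal_one]
  have hone : (1 : ℝ≥0∞) ≤ P F + P Fᶜ := by
    have hu := measure_union_le (μ := P) F Fᶜ
    rwa [Set.union_compl_self, measure_univ] at hu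
  have key : ENNReal.ofReal (x + y - 1) + P Fᶜ ≤ P F + P Fᶜ := by
    calc ENNReal.ofReal (x + y - 1) + P Fᶜ
        ≤ ENNReal.ofReal (x + y - 1) + (ENNReal.ofReal (1 - x) + ENNReal.ofReal (1 - y)) := by
          rw [← hsub1, ← hsub2]; exact add_le_add_right hPFc _
      _ = ENNReal.ofReal ((x + y - 1) + ((1 - x) + (1 - y))) := by
          rw [ENNReal.ofReal_add hpos.le (by linarith : (0:ℝ) ≤ (1 - x) + (1 - y)),
            ENNReal.ofReal_add (by linarith : (0:ℝ) ≤ 1 - x) (by linarith : (0:ℝ) ≤ 1 - y)]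
      _ = 1 := by rw [show (x + y - 1) + ((1 - x) + (1 - y)) = 1 by ring, ENNReal.ofReal_one]
      _ ≤ P F + P Fᶜ := hone
  exact (ENNReal.add_le_add_iff_right (measure_ne_top P Fᶜ)).mp key
end
end

section
/- Theorem (second part of Thm. 6 of the paper, via Cantelli's inequality). Let p and q be positive probability densities on ℝ^d such that ∫_{ℝ^d} p(x)·(log(q(x)/p(x)))² dx ≤ ε, and let δ ∈ (0,1). Then the set {x ∈ ℝ^d : log(q(x)/p(x)) > √(ε(1−δ)/δ)} has measure at most δ under the probability measure with density p; i.e., with probability at least 1 − δ over x drawn from p, log(q(x)/p(x)) ≤ √(ε(1−δ)/δ). -/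
open MeasureTheory

noncomputable section

/-- **Second part of Theorem 6 (via Cantelli's inequality).** If the second
moment of `log (q/p)` under `p` is at most `ε`, then with probability at least
`1 - δ` over `x ∼ p`, `log (q(x)/p(x)) ≤ √(ε(1-δ)/δ)`. -/
theorem log_ratio_tail_bound
    {d : ℕ} (p q : (Fin d → ℝ) → ℝ)
    (hp : IsPosDensity d p) (hq : IsPosDensity d q)
    (ε : ℝ)
    (hint : Integrable (fun x => p x * (Real.log (q x / p x)) ^ 2))
    (hε : ∫ x, p x * (Real.log (q x / p x)) ^ 2 ≤ ε)
    (δ : ℝ) (hδ0 : 0 < δ) (hδ1 : δ < 1) :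
    densMeasure p {x | Real.sqrt (ε * (1 - δ) / δ) < Real.log (q x / p x)}
      ≤ ENNReal.ofReal δ := by
  obtain ⟨⟨hpm, hp0, hp1⟩, hpp⟩ := hp
  obtain ⟨⟨hqm, hq0, hq1⟩, hqq⟩ := hq
  rw [densMeasure]
  set Y : (Fin d → ℝ) → ℝ := fun x => Real.log (q x / p x) with hYdef
  have hYm : Measurable Y := (hqm.div hpm).log
  set t : ℝ := Real.sqrt (ε * (1 - δ) / δ) with htdef
  set S : Set (Fin d → ℝ) := {x | t < Y x} with hSdef
  have hS : MeasurableSet S := measurableSet_lt measurable_const hYm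
  -- integrability of p
  have hpInt : Integrable p := by
    by_contra h
    rw [integral_undef h] at hp1
    norm_num at hp1
  have hqInt : Integrable q := by
    by_contra h
    rw [integral_undef h] at hq1
    norm_num at hq1
  -- integrability of p * Y
  have hYint : Integrable (fun x => p x * Y x) := by
    refine Integrable.mono' ((hpInt.add hint).div_const 2) (hpm.mul hYm).aestronglyMeasurable
      (Filter.Eventually.of_forall fun x => ?_)
    have h1 : |Y x| ≤ (1 + Y x ^ 2) / 2 := by nlinarith [sq_abs (Y x), sq_nonneg (|Y x| - 1)]
    have : ‖p x * Y x‖ = p x * |Y x| := by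
      rw [Real.norm_eq_abs, abs_mul, abs_of_nonneg (hp0 x)]
    rw [this]
    have := mul_le_mul_of_nonneg_left h1 (hp0 x)
    calc p x * |Y x| ≤ p x * ((1 + Y x ^ 2) / 2) := this
      _ = (p x + p x * Y x ^ 2) / 2 := by ring
  -- mean ≤ 0
  have hmean : ∫ x, p x * Y x ≤ 0 := by
    have hpt : ∀ x, p x * Y x ≤ q x - p x := by
      intro x
      have hl : Y x ≤ q x / p x - 1 :=
        Real.log_le_sub_one_of_pos (div_pos (hqq x) (hpp x))
      have := mul_le_mul_of_nonneg_left hl (hp0 x)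
      calc p x * Y x ≤ p x * (q x / p x - 1) := this
        _ = q x - p x := by
            rw [mul_sub, mul_one, mul_comm (p x) (q x / p x), div_mul_cancel₀ _ (hpp x).ne']
    calc ∫ x, p x * Y x ≤ ∫ x, (q x - p x) := integral_mono hYint (hqInt.sub hpInt) hpt
      _ = (∫ x, q x) - ∫ x, p x := integral_sub hqInt hpInt
      _ = 0 := by rw [hp1, hq1]; ring
  have hε0 : 0 ≤ ε := le_trans (integral_nonneg fun x => mul_nonneg (hp0 x) (sq_nonneg _)) hε
  rcases hε0.lt_or_eq with hεpos | hεzero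
  · -- ε > 0 case
    have h1δ : 0 < 1 - δ := by linarith
    have ht2 : t ^ 2 = ε * (1 - δ) / δ :=
      Real.sq_sqrt (div_nonneg (mul_nonneg hεpos.le h1δ.le) hδ0.le)
    have htpos : 0 < t := Real.sqrt_pos.mpr (div_pos (mul_pos hεpos h1δ) hδ0)
    set u : ℝ := ε / t with hudef
    have hupos : 0 < u := div_pos hεpos htpos
    -- integrability of p * (Y + u)^2
    have hI : Integrable (fun x => p x * (Y x + u) ^ 2) := by
      have : (fun x => p x * (Y x + u) ^ 2)
          = fun x => p x * Y x ^ 2 + (2 * u) * (p x * Y x) + u ^ 2 * p x := by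
        funext x; ring
      rw [this]
      exact (hint.add (hYint.const_mul (2 * u))).add (hpInt.const_mul (u ^ 2))
    have hI2 : ∫ x, p x * (Y x + u) ^ 2 ≤ ε + u ^ 2 := by
      have hre : (fun x => p x * (Y x + u) ^ 2)
          = fun x => (p x * Y x ^ 2 + 2 * u * (p x * Y x)) + u ^ 2 * p x := by
        funext x; ring
      have hA : Integrable (fun x => p x * Y x ^ 2 + 2 * u * (p x * Y x)) :=
        hint.add (hYint.const_mul (2 * u))
      have hB : Integrable (fun x => u ^ 2 * p x) := hpInt.const_mul (u ^ 2)
      have heq : ∫ x, p x * (Y x + u) ^ 2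
          = ((∫ x, p x * Y x ^ 2) + (2 * u) * ∫ x, p x * Y x) + u ^ 2 * ∫ x, p x := by
        rw [hre, integral_add hA hB, integral_add hint (hYint.const_mul (2*u)),
          integral_const_mul, integral_const_mul]
      rw [heq, hp1]
      have h2 : (2 * u) * ∫ x, p x * Y x ≤ 0 :=
        mul_nonpos_of_nonneg_of_nonpos (by positivity) hmean
      nlinarith
    -- Markov step
    have hIndInt : Integrable (S.indicator p) := hpInt.indicator hS
    have hkey : (∫ x, S.indicator p x) * (t + u) ^ 2 ≤ ε + u ^ 2 := by
      have hmono : ∀ x, S.indicator p x * (t + u) ^ 2 ≤ p x * (Y x + u) ^ 2 := by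
        intro x
        by_cases hx : x ∈ S
        · rw [Set.indicator_of_mem hx]
          have hxY : t < Y x := hx
          have : (t + u) ^ 2 ≤ (Y x + u) ^ 2 := by nlinarith
          exact mul_le_mul_of_nonneg_left this (hp0 x)
        · rw [Set.indicator_of_notMem hx]
          simp only [zero_mul]
          exact mul_nonneg (hp0 x) (sq_nonneg _)
      calc (∫ x, S.indicator p x) * (t + u) ^ 2
          = ∫ x, S.indicator p x * (t + u) ^ 2 := (integral_mul_const _ _).symm
        _ ≤ ∫ x, p x * (Y x + u) ^ 2 := integral_mono (hIndInt.mul_const _) hI hmono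
        _ ≤ ε + u ^ 2 := hI2
    have hut : u * t = ε := div_mul_cancel₀ ε htpos.ne'
    have hu2 : u ^ 2 * (1 - δ) = ε * δ := by
      have h1 : u ^ 2 * t ^ 2 = ε ^ 2 := by nlinarith [hut]
      rw [ht2] at h1
      have h1' : ε * (u ^ 2 * (1 - δ)) = ε * (ε * δ) := by
        field_simp at h1
        linear_combination ε * h1
      exact mul_left_cancel₀ hεpos.ne' h1'
    have ht2m : δ * t ^ 2 = ε * (1 - δ) := by
      rw [ht2]; field_simp
    have hδeq : ε + u ^ 2 = δ * (t + u) ^ 2 := by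
      linear_combination (-1 : ℝ) * ht2m - 2 * δ * hut + hu2
    have hfinal : (∫ x, S.indicator p x) ≤ δ := by
      have htu : 0 < (t + u) ^ 2 := by positivity
      rw [hδeq] at hkey
      exact le_of_mul_le_mul_right hkey htu
    -- translate to measure
    have hmeas : volume.withDensity (fun x => ENNReal.ofReal (p x)) S
        = ENNReal.ofReal (∫ x, S.indicator p x) := by
      rw [withDensity_apply _ hS,
        ofReal_integral_eq_lintegral_ofReal hIndInt
          (Filter.Eventually.of_forall fun x => Set.indicator_nonneg (fun y _ => hp0 y) x)]
      rw [← lintegral_indicator hS]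
      congr 1
      funext x
      by_cases hx : x ∈ S <;> simp [hx]
    rw [hmeas]
    exact ENNReal.ofReal_le_ofReal hfinal
  · -- ε = 0 case
    have hzero : ∫ x, p x * Y x ^ 2 = 0 :=
      le_antisymm (hεzero ▸ hε) (integral_nonneg fun x => mul_nonneg (hp0 x) (sq_nonneg _))
    have hae : ∀ᵐ x, p x * Y x ^ 2 = 0 := by
      have := (integral_eq_zero_iff_of_nonneg
        (fun x => mul_nonneg (hp0 x) (sq_nonneg _)) hint).mp hzero
      filter_upwards [this] with x hx using hx
    have hnull : volume S = 0 := by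
      refine measure_mono_null (fun x hx => ?_) (by
        have : {x | ¬ (p x * Y x ^ 2 = 0)} ⊆ {x | ¬ (p x * Y x ^ 2 = 0)} := subset_rfl
        exact hae)
      have hxY : t < Y x := hx
      have ht0 : t = 0 := by
        rw [htdef, ← hεzero]; simp
      intro habs
      have : Y x = 0 := by
        rcases mul_eq_zero.mp habs with h | h
        · exact absurd h (ne_of_gt (hpp x))
        · exact pow_eq_zero_iff (by norm_num) |>.mp h
      rw [this, ht0] at hxY
      exact lt_irrefl 0 hxY
    rw [withDensity_apply _ hS, Measure.restrict_eq_zero.mpr hnull, lintegral_zero_measure]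
    exact zero_le
end
end

section
/- Proposition (closed-form MMD between Gaussian KDE models, Appendix B.3 of the paper). Let x₁, …, x_N ∈ ℝ^d and 1 ≤ N' < N. Let p̂ be the density of the mixture (1/N) Σ_{i=1}^N N(x_i, I_d) and p̂' the density of (1/(N−N')) Σ_{i=N'+1}^N N(x_i, I_d). With the RBF kernel K(x,y) = exp(−‖x−y‖²/2), define MMD²(p̂', p̂) = E_{x,y∼p̂} K(x,y) − 2 E_{x∼p̂, y∼p̂'} K(x,y) + E_{x,y∼p̂'} K(x,y), where all pairs of samples are independent. Then MMD²(p̂', p̂) = 3^{−d/2} · [ (N'²/(N²(N−N')²)) Σ_{i=N'+1}^N Σ_{j=N'+1}^N − ((N+N')/(N²(N−N'))) Σ_{i=1}^{N'} Σ_{j=N'+1}^N + (1/N²) Σ_{i=1}^N Σ_{j=1}^{N'} ] exp(−‖x_i − x_j‖²/6). -/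
open MeasureTheory ProbabilityTheory

noncomputable section

/-- The standard Gaussian measure `N(a, I_d)` on `ℝ^d` (identity covariance),
realized as the product of one-dimensional Gaussians `N(aᵢ, 1)`. -/
def stdGaussianPi {d : ℕ} (a : Fin d → ℝ) : Measure (Fin d → ℝ) :=
  Measure.pi (fun i => gaussianReal (a i) 1)

/-- The Gaussian KDE (unit bandwidth) on the points `xs`, as a measure: the
uniform mixture `(1/n) ∑ᵢ N(xsᵢ, I_d)`. -/
def kdeMeasure {d n : ℕ} (xs : Fin n → Fin d → ℝ) : Measure (Fin d → ℝ) :=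
  (n : ENNReal)⁻¹ • ∑ i : Fin n, stdGaussianPi (xs i)

instance {d : ℕ} (a : Fin d → ℝ) : IsProbabilityMeasure (stdGaussianPi a) := by
  unfold stdGaussianPi; infer_instance

lemma integral_pi_prod {d : ℕ} (μ : Fin d → Measure ℝ) [inst : ∀ i, SigmaFinite (μ i)]
    (f : Fin d → ℝ → ℝ) :
    ∫ x : Fin d → ℝ, ∏ i, f i (x i) ∂(Measure.pi μ) = ∏ i, ∫ x, f i x ∂(μ i) :=
  MeasureTheory.integral_fintype_prod_eq_prod (E := fun _ => ℝ) f (μ := μ)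

open Real in
lemma gauss_int {c : ℝ} (hc : 0 < c) (t m : ℝ) :
    ∫ x, Real.exp (-(c * (x - t) ^ 2)) ∂(gaussianReal m 1) =
      Real.sqrt (2 * c + 1)⁻¹ * Real.exp (-(c * (t - m) ^ 2 / (2 * c + 1))) := by
  have h2c : (0:ℝ) < 2 * c + 1 := by linarith
  rw [gaussianReal_of_var_ne_zero _ one_ne_zero]
  have hpdf : gaussianPDF m 1 = fun x => ((Real.toNNReal (gaussianPDFReal m 1 x) : NNReal) : ENNReal) :=
    rfl
  rw [hpdf, integral_withDensity_eq_integral_smul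
      ((measurable_gaussianPDFReal m 1).real_toNNReal) _]
  have hsmul : ∀ x : ℝ, (Real.toNNReal (gaussianPDFReal m 1 x)) • Real.exp (-(c * (x - t) ^ 2))
      = (Real.sqrt (2 * π))⁻¹ * Real.exp (-(c * (t - m) ^ 2 / (2 * c + 1)))
        * Real.exp (-((2 * c + 1) / 2 * (x - (2 * c * t + m) / (2 * c + 1)) ^ 2)) := by
    intro x
    rw [NNReal.smul_def, smul_eq_mul, Real.coe_toNNReal _ (gaussianPDFReal_nonneg m 1 x)]
    rw [gaussianPDFReal]
    push_cast
    rw [mul_one, mul_assoc, mul_assoc, ← Real.exp_add, ← Real.exp_add]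
    congr 1
    rw [Real.exp_eq_exp]
    field_simp
    ring
  simp_rw [hsmul]
  rw [integral_const_mul]
  have : ∫ x : ℝ, Real.exp (-((2 * c + 1) / 2 * (x - (2 * c * t + m) / (2 * c + 1)) ^ 2))
      = Real.sqrt (π / ((2 * c + 1) / 2)) := by
    rw [← integral_gaussian ((2 * c + 1) / 2)]
    rw [← integral_sub_right_eq_self
        (fun y => Real.exp (-((2 * c + 1) / 2) * y ^ 2)) ((2 * c * t + m) / (2 * c + 1))]
    congr 1
    ext x
    ring_nf
  rw [this]
  rw [mul_comm ((Real.sqrt (2*π))⁻¹) _, mul_assoc]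
  rw [mul_comm]
  congr 1
  rw [← Real.sqrt_inv, ← Real.sqrt_mul (by positivity)]
  congr 1
  have hπ : (0:ℝ) < π := pi_pos
  field_simp

lemma inner_int {d : ℕ} (b : Fin d → ℝ) (u : Fin d → ℝ) :
    ∫ v, Real.exp (-(∑ k, (u k - v k) ^ 2) / 2) ∂(stdGaussianPi b)
      = ∏ k, (Real.sqrt 2⁻¹ * Real.exp (-((1:ℝ)/2 * (u k - b k) ^ 2 / 2))) := by
  have hfac : ∀ v : Fin d → ℝ, Real.exp (-(∑ k, (u k - v k) ^ 2) / 2)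
      = ∏ k, Real.exp (-((1:ℝ)/2 * (v k - u k) ^ 2)) := by
    intro v
    rw [← Real.exp_sum]
    congr 1
    rw [neg_div, Finset.sum_div, ← Finset.sum_neg_distrib]
    exact Finset.sum_congr rfl fun k _ => by ring
  simp_rw [hfac]
  rw [stdGaussianPi, integral_pi_prod (fun i => gaussianReal (b i) 1)
    (fun k y => Real.exp (-((1:ℝ)/2 * (y - u k) ^ 2)))]
  refine Finset.prod_congr rfl fun k _ => ?_
  rw [gauss_int (by norm_num : (0:ℝ) < 1/2) (u k) (b k),
    show (2 * (1/2:ℝ) + 1) = 2 by norm_num]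

lemma pair_int {d : ℕ} (a b : Fin d → ℝ) :
    ∫ u, ∫ v, Real.exp (-(∑ k, (u k - v k) ^ 2) / 2)
        ∂(stdGaussianPi b) ∂(stdGaussianPi a)
      = (3:ℝ) ^ (-(d:ℝ)/2) * Real.exp (-(∑ k, (a k - b k) ^ 2) / 6) := by
  simp_rw [inner_int b]
  rw [stdGaussianPi, integral_pi_prod (fun i => gaussianReal (a i) 1)
    (fun k y => Real.sqrt 2⁻¹ * Real.exp (-((1:ℝ)/2 * (y - b k) ^ 2 / 2)))]
  have hk : ∀ k : Fin d, (∫ y, Real.sqrt 2⁻¹ * Real.exp (-((1:ℝ)/2 * (y - b k) ^ 2 / 2))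
        ∂(gaussianReal (a k) 1))
      = (3:ℝ) ^ (-(1:ℝ)/2) * Real.exp (-((a k - b k) ^ 2 / 6)) := by
    intro k
    rw [integral_const_mul]
    have h1 : ∀ y : ℝ, Real.exp (-((1:ℝ)/2 * (y - b k) ^ 2 / 2))
        = Real.exp (-((1:ℝ)/4 * (y - b k) ^ 2)) := fun y => by
      rw [show (1:ℝ)/2 * (y - b k) ^ 2 / 2 = (1:ℝ)/4 * (y - b k) ^ 2 from by ring]
    simp_rw [h1]
    rw [gauss_int (by norm_num : (0:ℝ) < 1/4) (b k) (a k),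
      show (2 * (1/4:ℝ) + 1) = 3/2 by norm_num, ← mul_assoc]
    have h2 : Real.sqrt 2⁻¹ * Real.sqrt (3/2)⁻¹ = (3:ℝ) ^ (-(1:ℝ)/2) := by
      rw [← Real.sqrt_mul (by norm_num), show ((2:ℝ)⁻¹ * (3/2)⁻¹) = 3⁻¹ by norm_num,
        Real.sqrt_eq_rpow, ← Real.rpow_neg_one 3,
        ← Real.rpow_mul (by norm_num : (0:ℝ) ≤ 3)]
      norm_num
    rw [h2]
    congr 2
    ring
  simp_rw [hk]
  rw [Finset.prod_mul_distrib, Finset.prod_const, ← Real.exp_sum,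
    Finset.card_univ, Fintype.card_fin]
  congr 1
  · rw [← Real.rpow_natCast ((3:ℝ) ^ (-(1:ℝ)/2)) d,
      ← Real.rpow_mul (by norm_num : (0:ℝ) ≤ 3)]
    congr 1
    ring
  · rw [Finset.sum_neg_distrib, neg_div, Finset.sum_div]

lemma K_int {d : ℕ} (u : Fin d → ℝ) (b : Fin d → ℝ) :
    Integrable (fun v : Fin d → ℝ => Real.exp (-(∑ k, (u k - v k) ^ 2) / 2))
      (stdGaussianPi b) := by
  refine (integrable_const (1:ℝ)).mono'
    (Continuous.aestronglyMeasurable (by fun_prop)) (ae_of_all _ fun v => ?_)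
  rw [Real.norm_eq_abs, abs_of_pos (Real.exp_pos _)]
  apply Real.exp_le_one_iff.mpr
  have h : (0:ℝ) ≤ ∑ k, (u k - v k) ^ 2 := by positivity
  rw [div_nonpos_iff]
  right; constructor <;> linarith

lemma h_int {d : ℕ} (b a : Fin d → ℝ) :
    Integrable (fun u : Fin d → ℝ =>
      ∏ k, (Real.sqrt 2⁻¹ * Real.exp (-((1:ℝ)/2 * (u k - b k) ^ 2 / 2))))
      (stdGaussianPi a) := by
  refine (integrable_const (1:ℝ)).mono'
    (Continuous.aestronglyMeasurable (by fun_prop)) (ae_of_all _ fun u => ?_)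
  rw [Real.norm_eq_abs, abs_of_nonneg (by positivity)]
  apply Finset.prod_le_one
  · intro k _; positivity
  · intro k _
    have h1 : Real.sqrt 2⁻¹ ≤ 1 := by
      have := Real.sqrt_le_sqrt (show (2:ℝ)⁻¹ ≤ 1 by norm_num)
      simpa using this
    have h2 : Real.exp (-((1:ℝ)/2 * (u k - b k) ^ 2 / 2)) ≤ 1 :=
      Real.exp_le_one_iff.mpr (neg_nonpos.mpr (by positivity))
    exact mul_le_one₀ h1 (Real.exp_pos _).le h2

lemma kde_double {d n m : ℕ} (xs : Fin n → Fin d → ℝ) (ys : Fin m → Fin d → ℝ) :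
    ∫ u, ∫ v, Real.exp (-(∑ k, (u k - v k) ^ 2) / 2)
        ∂(kdeMeasure ys) ∂(kdeMeasure xs)
      = (n:ℝ)⁻¹ * (m:ℝ)⁻¹ * ∑ i, ∑ j,
          (3:ℝ) ^ (-(d:ℝ)/2) * Real.exp (-(∑ k, (xs i k - ys j k) ^ 2) / 6) := by
  have hinner : ∀ u : Fin d → ℝ,
      (∫ v, Real.exp (-(∑ k, (u k - v k) ^ 2) / 2) ∂(kdeMeasure ys))
      = (m:ℝ)⁻¹ * ∑ j, ∏ k,
          (Real.sqrt 2⁻¹ * Real.exp (-((1:ℝ)/2 * (u k - ys j k) ^ 2 / 2))) := by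
    intro u
    rw [kdeMeasure, integral_smul_measure,
      integral_finset_sum_measure (fun j _ => K_int u (ys j))]
    simp_rw [inner_int]
    rw [smul_eq_mul, ENNReal.toReal_inv, ENNReal.toReal_natCast]
  simp_rw [hinner]
  have hone : ∀ i : Fin n, (∫ u, ((m:ℝ)⁻¹ * ∑ j, ∏ k,
        (Real.sqrt 2⁻¹ * Real.exp (-((1:ℝ)/2 * (u k - ys j k) ^ 2 / 2))))
        ∂(stdGaussianPi (xs i)))
      = (m:ℝ)⁻¹ * ∑ j, (3:ℝ) ^ (-(d:ℝ)/2)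
          * Real.exp (-(∑ k, (xs i k - ys j k) ^ 2) / 6) := by
    intro i
    rw [integral_const_mul, integral_finset_sum _ (fun j _ => h_int (ys j) (xs i))]
    congr 1
    refine Finset.sum_congr rfl fun j _ => ?_
    have h := pair_int (xs i) (ys j)
    simp_rw [inner_int (ys j)] at h
    exact h
  have hIf : ∀ aa : Fin d → ℝ, Integrable (fun u : Fin d → ℝ => (m:ℝ)⁻¹ * ∑ j, ∏ k,
      (Real.sqrt 2⁻¹ * Real.exp (-((1:ℝ)/2 * (u k - ys j k) ^ 2 / 2)))) (stdGaussianPi aa) :=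
    fun aa => ((integrable_finset_sum _ (fun j _ => h_int (ys j) aa)).const_mul _)
  rw [kdeMeasure, integral_smul_measure,
    integral_finset_sum_measure (fun i _ => hIf (xs i))]
  simp_rw [hone]
  rw [smul_eq_mul, ENNReal.toReal_inv, ENNReal.toReal_natCast, ← Finset.mul_sum, ← mul_assoc]

lemma sum_tail {N N' : ℕ} (h : N' < N) (f : Fin N → ℝ) :
    ∑ i : Fin (N - N'), f ⟨N' + i.1, by have := i.isLt; omega⟩
      = ∑ i ∈ Finset.univ.filter (fun i : Fin N => N' ≤ i.1), f i := by
  refine Finset.sum_nbij' (fun i : Fin (N - N') => (⟨N' + i.1, by have := i.isLt; omega⟩ : Fin N))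
    (fun i : Fin N => (⟨i.1 - N', by have := i.isLt; omega⟩ : Fin (N - N')))
    ?_ ?_ ?_ ?_ ?_
  · intro a _; simp
  · intro a ha; simp
  · intro a _; ext; simp
  · intro a ha
    simp only [Finset.mem_filter] at ha
    ext; simp; omega
  · intro a _; rfl

/-- **Closed-form MMD between Gaussian KDE models** (Appendix B.3). With
`p̂ = (1/N) ∑_{i=1}^N N(xᵢ, I_d)`, `p̂' = (1/(N-N')) ∑_{i=N'+1}^N N(xᵢ, I_d)` and
the RBF kernel `K(x,y) = exp(-‖x-y‖²/2)`,
`MMD²(p̂', p̂) = E_{p̂,p̂}K - 2E_{p̂,p̂'}K + E_{p̂',p̂'}K` has the stated closed form. -/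
theorem mmd_kde_closed_form
    {d N N' : ℕ} (hd : 1 ≤ d) (hN'1 : 1 ≤ N') (hN'N : N' < N)
    (x : Fin N → Fin d → ℝ) :
    (∫ u, ∫ v, Real.exp (-(∑ k, (u k - v k) ^ 2) / 2)
        ∂(kdeMeasure x) ∂(kdeMeasure x))
      - 2 * (∫ u, ∫ v, Real.exp (-(∑ k, (u k - v k) ^ 2) / 2)
          ∂(kdeMeasure (fun i : Fin (N - N') =>
              x ⟨N' + i.1, by have := i.isLt; omega⟩)) ∂(kdeMeasure x))
      + (∫ u, ∫ v, Real.exp (-(∑ k, (u k - v k) ^ 2) / 2)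
          ∂(kdeMeasure (fun i : Fin (N - N') =>
              x ⟨N' + i.1, by have := i.isLt; omega⟩))
          ∂(kdeMeasure (fun i : Fin (N - N') =>
              x ⟨N' + i.1, by have := i.isLt; omega⟩)))
    = (3 : ℝ) ^ (-(d : ℝ) / 2) *
        (((N' : ℝ) ^ 2 / ((N : ℝ) ^ 2 * ((N : ℝ) - (N' : ℝ)) ^ 2)) *
            ∑ i ∈ Finset.univ.filter (fun i : Fin N => N' ≤ i.1),
              ∑ j ∈ Finset.univ.filter (fun j : Fin N => N' ≤ j.1),
                Real.exp (-(∑ k, (x i k - x j k) ^ 2) / 6)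
          - (((N : ℝ) + (N' : ℝ)) / ((N : ℝ) ^ 2 * ((N : ℝ) - (N' : ℝ)))) *
            ∑ i ∈ Finset.univ.filter (fun i : Fin N => i.1 < N'),
              ∑ j ∈ Finset.univ.filter (fun j : Fin N => N' ≤ j.1),
                Real.exp (-(∑ k, (x i k - x j k) ^ 2) / 6)
          + (1 / (N : ℝ) ^ 2) *
            ∑ i : Fin N,
              ∑ j ∈ Finset.univ.filter (fun j : Fin N => j.1 < N'),
                Real.exp (-(∑ k, (x i k - x j k) ^ 2) / 6)) := by
  rw [kde_double x x,
    kde_double x (fun i : Fin (N - N') => x ⟨N' + i.1, by have := i.isLt; omega⟩),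
    kde_double (fun i : Fin (N - N') => x ⟨N' + i.1, by have := i.isLt; omega⟩)
      (fun i : Fin (N - N') => x ⟨N' + i.1, by have := i.isLt; omega⟩)]
  simp_rw [← Finset.mul_sum]
  -- reindex tail sums
  have h2 : (∑ i : Fin N, ∑ j : Fin (N - N'),
        Real.exp (-(∑ k, (x i k - x ⟨N' + j.1, by have := j.isLt; omega⟩ k) ^ 2) / 6))
      = ∑ i : Fin N, ∑ j ∈ Finset.univ.filter (fun j : Fin N => N' ≤ j.1),
          Real.exp (-(∑ k, (x i k - x j k) ^ 2) / 6) :=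
    Finset.sum_congr rfl fun i _ => sum_tail hN'N
      (fun j => Real.exp (-(∑ k, (x i k - x j k) ^ 2) / 6))
  have h3 : (∑ i : Fin (N - N'), ∑ j : Fin (N - N'),
        Real.exp (-(∑ k, (x ⟨N' + i.1, by have := i.isLt; omega⟩ k
          - x ⟨N' + j.1, by have := j.isLt; omega⟩ k) ^ 2) / 6))
      = ∑ i ∈ Finset.univ.filter (fun i : Fin N => N' ≤ i.1),
          ∑ j ∈ Finset.univ.filter (fun j : Fin N => N' ≤ j.1),
            Real.exp (-(∑ k, (x i k - x j k) ^ 2) / 6) := by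
    rw [show (∑ i : Fin (N - N'), ∑ j : Fin (N - N'),
        Real.exp (-(∑ k, (x ⟨N' + i.1, by have := i.isLt; omega⟩ k
          - x ⟨N' + j.1, by have := j.isLt; omega⟩ k) ^ 2) / 6))
      = ∑ i : Fin (N - N'), ∑ j ∈ Finset.univ.filter (fun j : Fin N => N' ≤ j.1),
          Real.exp (-(∑ k, (x ⟨N' + i.1, by have := i.isLt; omega⟩ k - x j k) ^ 2) / 6) from
      Finset.sum_congr rfl fun i _ => sum_tail hN'N
        (fun j => Real.exp (-(∑ k, (x ⟨N' + i.1, by have := i.isLt; omega⟩ k - x j k) ^ 2) / 6))]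
    exact sum_tail hN'N (fun i => ∑ j ∈ Finset.univ.filter (fun j : Fin N => N' ≤ j.1),
      Real.exp (-(∑ k, (x i k - x j k) ^ 2) / 6))
  rw [h2, h3]
  -- split sums
  have hfilter : Finset.univ.filter (fun j : Fin N => ¬ j.1 < N')
      = Finset.univ.filter (fun j : Fin N => N' ≤ j.1) :=
    Finset.filter_congr (fun j _ => by simp [Nat.not_lt])
  have hT : (∑ i : Fin N, ∑ j : Fin N, Real.exp (-(∑ k, (x i k - x j k) ^ 2) / 6))
      = (∑ i : Fin N, ∑ j ∈ Finset.univ.filter (fun j : Fin N => j.1 < N'),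
          Real.exp (-(∑ k, (x i k - x j k) ^ 2) / 6))
        + ∑ i : Fin N, ∑ j ∈ Finset.univ.filter (fun j : Fin N => N' ≤ j.1),
            Real.exp (-(∑ k, (x i k - x j k) ^ 2) / 6) := by
    rw [← Finset.sum_add_distrib]
    refine Finset.sum_congr rfl fun i _ => ?_
    rw [← hfilter, Finset.sum_filter_add_sum_filter_not]
  have hW : (∑ i : Fin N, ∑ j ∈ Finset.univ.filter (fun j : Fin N => N' ≤ j.1),
        Real.exp (-(∑ k, (x i k - x j k) ^ 2) / 6))
      = (∑ i ∈ Finset.univ.filter (fun i : Fin N => i.1 < N'),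
          ∑ j ∈ Finset.univ.filter (fun j : Fin N => N' ≤ j.1),
            Real.exp (-(∑ k, (x i k - x j k) ^ 2) / 6))
        + ∑ i ∈ Finset.univ.filter (fun i : Fin N => N' ≤ i.1),
            ∑ j ∈ Finset.univ.filter (fun j : Fin N => N' ≤ j.1),
              Real.exp (-(∑ k, (x i k - x j k) ^ 2) / 6) := by
    rw [← hfilter, Finset.sum_filter_add_sum_filter_not]
  rw [hT, hW]
  rw [Nat.cast_sub hN'N.le]
  have hN0 : (N:ℝ) ≠ 0 := Nat.cast_ne_zero.mpr (by omega)
  have hM0 : (N:ℝ) - (N':ℝ) ≠ 0 := by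
    have : (N':ℝ) < (N:ℝ) := by exact_mod_cast hN'N
    linarith
  field_simp
  ring

end
end
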